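/- Let B be a Banach space of holomorphic functions on a domain Ω ⊆ ℂ (dimension 1) with bounded, nonzero point evaluations which are linearly independent at distinct points. Let ψ be holomorphic with M_ψ bounded on B, φ a holomorphic self-map with C_φ bounded on B. If M_ψ C_φ is Fredholm on B, then ψ has at most finitely many zeros in Ω, and φ is injective. -/

import Mathlib

open Set Metric





open Set Metric

/-- An open nonempty subset of ℂ is infinite. -/
lemma aux_isOpen_infinite {s : Set ℂ} (hs : IsOpen s) (hne : s.Nonempty) : s.Infinite := by
  obtain ⟨x, hx⟩ := hne
  obtain ⟨ε, hε, hball⟩ := Metric.isOpen_iff.mp hs x hx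
  have hmaps : Set.MapsTo (fun t : ℝ => x + (t : ℂ)) (Set.Ioo 0 (ε / 2)) s := by
    intro t ht
    apply hball
    simp only [Metric.mem_ball, dist_eq_norm, add_sub_cancel_left, Complex.norm_real,
      Real.norm_eq_abs]
    rw [abs_of_pos ht.1]
    linarith [ht.2]
  have hinj : Set.InjOn (fun t : ℝ => x + (t : ℂ)) (Set.Ioo 0 (ε / 2)) := by
    intro t _ t' _ h
    simpa using Complex.ofReal_injective (add_right_injective x h)
  exact Set.infinite_of_injOn_mapsTo hinj hmaps (Set.Ioo_infinite (by linarith))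

/-- An open set containing a point contains another point. -/
lemma aux_exists_ne {s : Set ℂ} (hs : IsOpen s) {x : ℂ} (hx : x ∈ s) : ∃ y ∈ s, y ≠ x := by
  obtain ⟨ε, hε, hball⟩ := Metric.isOpen_iff.mp hs x hx
  refine ⟨x + ((ε / 2 : ℝ) : ℂ), hball ?_, ?_⟩
  · simp only [Metric.mem_ball, dist_eq_norm, add_sub_cancel_left, Complex.norm_real,
      Real.norm_eq_abs]
    rw [abs_of_pos (by linarith)]
    linarith
  · intro h
    have : ((ε / 2 : ℝ) : ℂ) = 0 := by
      have := congrArg (fun z => z - x) h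
      simpa [add_sub_cancel_left] using this
    simp only [Complex.ofReal_eq_zero] at this
    linarith

/-- Pick an injective tuple from an infinite set. -/
lemma aux_pick {s : Set ℂ} (hs : s.Infinite) (m : ℕ) :
    ∃ a : Fin m → ℂ, Function.Injective a ∧ ∀ i, a i ∈ s := by
  obtain ⟨t, hts, htc⟩ := hs.exists_subset_card_eq m
  have e : ↥t ≃ Fin m := Fintype.equivFinOfCardEq (by simp [htc])
  refine ⟨fun i => ((e.symm i : t) : ℂ), ?_, fun i => hts (e.symm i).2⟩
  intro i j h
  have := Subtype.val_injective h
  exact e.symm.injective this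

lemma li_sub {ι : Type*} [Fintype ι] {M : Type*} [AddCommGroup M] [Module ℂ M]
    {u : ι ⊕ ι → M} (hu : LinearIndependent ℂ u) (c d : ι → ℂ) (hc : ∀ i, c i ≠ 0) :
    LinearIndependent ℂ (fun i => c i • u (Sum.inl i) - d i • u (Sum.inr i)) := by
  rw [Fintype.linearIndependent_iff] at hu ⊢
  intro t ht i
  have hsum : ∑ j, (Sum.elim (fun i => t i * c i) (fun i => -(t i * d i))) j • u j = 0 := by
    rw [Fintype.sum_sum_type]
    simp only [Sum.elim_inl, Sum.elim_inr, neg_smul]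
    calc (∑ i, (t i * c i) • u (Sum.inl i)) + ∑ i, -((t i * d i) • u (Sum.inr i))
        = ∑ i, ((t i * c i) • u (Sum.inl i) + -((t i * d i) • u (Sum.inr i))) := by
          rw [Finset.sum_add_distrib]
      _ = ∑ i, t i • (c i • u (Sum.inl i) - d i • u (Sum.inr i)) := by
          refine Finset.sum_congr rfl fun i _ => ?_
          rw [smul_sub, smul_smul, smul_smul, sub_eq_add_neg]
      _ = 0 := ht
  have h0 := hu _ hsum (Sum.inl i)
  simp only [Sum.elim_inl] at h0
  exact (mul_eq_zero.mp h0).resolve_right (hc i)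




/-- A bounded operator on a Banach space is Fredholm if it has closed range,
finite-dimensional kernel, and the kernel of its Banach adjoint is finite-dimensional. -/
def IsFredholm {B : Type*} [NormedAddCommGroup B] [NormedSpace ℂ B]
    (T : B →L[ℂ] B) : Prop :=
  IsClosed (Set.range T) ∧ FiniteDimensional ℂ (LinearMap.ker (T : B →ₗ[ℂ] B)) ∧
    FiniteDimensional ℂ
      (LinearMap.ker ((ContinuousLinearMap.compL ℂ B B ℂ).flip T : (B →L[ℂ] ℂ) →ₗ[ℂ] (B →L[ℂ] ℂ)))

/-- In dimension 1, if the weighted composition operator M_ψ C_φ is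
Fredholm on a Banach space of holomorphic functions on Ω ⊆ ℂ with bounded, nonzero,
linearly independent point evaluations, then ψ has at most finitely many zeros in Ω and
φ is injective on Ω. -/
theorem stmt_15 (Ω : Set ℂ) (hΩ : IsOpen Ω) (hconn : IsConnected Ω)
    (hbdd : Bornology.IsBounded Ω)
    (B : Type*) [NormedAddCommGroup B] [NormedSpace ℂ B] [CompleteSpace B]
    (ev : B →ₗ[ℂ] (ℂ → ℂ))
    (hHol : ∀ f : B, DifferentiableOn ℂ (ev f) Ω)
    (K : ℂ → (B →L[ℂ] ℂ))
    (hK : ∀ z ∈ Ω, ∀ f : B, K z f = ev f z)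
    (hKne : ∀ z ∈ Ω, K z ≠ 0)
    (hsep : ∀ (m : ℕ) (a : Fin m → ℂ), (∀ i, a i ∈ Ω) →
      Function.Injective a → LinearIndependent ℂ (fun i => K (a i)))
    (ψ : ℂ → ℂ) (hψHol : DifferentiableOn ℂ ψ Ω)
    (Mψ : B →L[ℂ] B) (hMψ : ∀ f : B, ∀ z ∈ Ω, ev (Mψ f) z = ψ z * ev f z)
    (φ : ℂ → ℂ) (hφΩ : Set.MapsTo φ Ω Ω) (hφHol : DifferentiableOn ℂ φ Ω)
    (Cφ : B →L[ℂ] B) (hCφ : ∀ f : B, ∀ z ∈ Ω, ev (Cφ f) z = ev f (φ z))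
    (hFred : IsFredholm (Mψ.comp Cφ)) :
    {z ∈ Ω | ψ z = 0}.Finite ∧ Set.InjOn φ Ω := by
  obtain ⟨-, -, hfin⟩ := hFred
  set T : B →L[ℂ] B := Mψ.comp Cφ with hT
  set A := ((ContinuousLinearMap.compL ℂ B B ℂ).flip T : (B →L[ℂ] ℂ) →ₗ[ℂ] (B →L[ℂ] ℂ)) with hA
  haveI : FiniteDimensional ℂ (LinearMap.ker A) := hfin
  set n := Module.finrank ℂ (LinearMap.ker A) with hn
  have hmem : ∀ g : B →L[ℂ] ℂ, g.comp T = 0 → g ∈ LinearMap.ker A := by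
    intro g hg
    rw [LinearMap.mem_ker]
    show (ContinuousLinearMap.compL ℂ B B ℂ).flip T g = 0
    rw [ContinuousLinearMap.flip_apply, ContinuousLinearMap.compL_apply]
    exact hg
  have key : ∀ z ∈ Ω, (K z).comp T = ψ z • K (φ z) := by
    intro z hz
    ext f
    calc (K z).comp T f = ev (Mψ (Cφ f)) z := hK z hz _
      _ = ψ z * ev (Cφ f) z := hMψ _ z hz
      _ = ψ z * ev f (φ z) := by rw [hCφ f z hz]
      _ = ψ z * K (φ z) f := by rw [hK (φ z) (hφΩ hz) f]
      _ = (ψ z • K (φ z)) f := rfl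
  have contra : ∀ v : Fin (n + 1) → (B →L[ℂ] ℂ), LinearIndependent ℂ v →
      (∀ i, v i ∈ LinearMap.ker A) → False := by
    intro v hv hvmem
    let u : Fin (n + 1) → LinearMap.ker A := fun i => ⟨v i, hvmem i⟩
    have hu : LinearIndependent ℂ u := by
      apply LinearIndependent.of_comp (LinearMap.ker A).subtype
      exact hv
    have hcard := hu.fintype_card_le_finrank
    rw [Fintype.card_fin] at hcard
    omega
  have part1 : {z ∈ Ω | ψ z = 0}.Finite := by
    by_contra hinf
    have hinf' : Set.Infinite {z ∈ Ω | ψ z = 0} := hinf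
    obtain ⟨a, hainj, hamem⟩ := aux_pick hinf' (n + 1)
    refine contra (fun i => K (a i)) (hsep _ a (fun i => (hamem i).1) hainj) fun i => ?_
    apply hmem
    have hk := key _ (hamem i).1
    rw [(hamem i).2] at hk
    rw [hk]
    ext f
    simp
  refine ⟨part1, ?_⟩
  intro z₀ hz₀ w₀ hw₀ hφeq
  by_contra hne
  have claim : ∃ a : Fin (n + 1) ⊕ Fin (n + 1) → ℂ, Function.Injective a ∧
      (∀ j, a j ∈ Ω ∧ ψ (a j) ≠ 0) ∧
      (∀ i, φ (a (Sum.inl i)) = φ (a (Sum.inr i))) := by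
    have hφan : AnalyticOnNhd ℂ φ Ω := hφHol.analyticOnNhd hΩ
    rcases hφan.is_constant_or_isOpen hconn.isPreconnected with ⟨c, hc⟩ | hop
    · -- constant case
      have hΩinf : Ω.Infinite := aux_isOpen_infinite hΩ hconn.nonempty
      have hdiff : (Ω \ {z ∈ Ω | ψ z = 0}).Infinite := hΩinf.diff part1
      obtain ⟨b, hbinj, hbmem⟩ := aux_pick hdiff ((n + 1) + (n + 1))
      refine ⟨b ∘ finSumFinEquiv, hbinj.comp finSumFinEquiv.injective, ?_, ?_⟩
      · intro j
        have h := hbmem (finSumFinEquiv j)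
        exact ⟨h.1, fun h0 => h.2 ⟨h.1, h0⟩⟩
      · intro i
        rw [Function.comp_apply, Function.comp_apply,
          hc _ (hbmem _).1, hc _ (hbmem _).1]
    · -- open case
      obtain ⟨r₁, hr₁, hball₁⟩ := Metric.isOpen_iff.mp hΩ z₀ hz₀
      obtain ⟨r₂, hr₂, hball₂⟩ := Metric.isOpen_iff.mp hΩ w₀ hw₀
      have hd0 : 0 < dist z₀ w₀ := dist_pos.mpr hne
      set r := min (min r₁ r₂) (dist z₀ w₀ / 2) with hr
      have hrpos : 0 < r := lt_min (lt_min hr₁ hr₂) (by linarith)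
      have hdisj : Disjoint (ball z₀ r) (ball w₀ r) := by
        apply ball_disjoint_ball
        have : r ≤ dist z₀ w₀ / 2 := min_le_right _ _
        linarith
      have hsubz : ball z₀ r ⊆ Ω :=
        subset_trans (ball_subset_ball (le_trans (min_le_left _ _) (min_le_left _ _))) hball₁
      have hsubw : ball w₀ r ⊆ Ω :=
        subset_trans (ball_subset_ball (le_trans (min_le_left _ _) (min_le_right _ _))) hball₂
      have havoid : ∀ p : ℂ, ∃ ρ > 0, ∀ x, dist x p < ρ → x ≠ p →
          x ∉ {z ∈ Ω | ψ z = 0} := by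
        intro p
        have hcl : IsClosed ({z ∈ Ω | ψ z = 0} \ {p}) := (part1.diff (t := {p})).isClosed
        have hpmem : p ∈ ({z ∈ Ω | ψ z = 0} \ {p})ᶜ := by simp
        obtain ⟨ρ, hρ, hball⟩ := Metric.isOpen_iff.mp hcl.isOpen_compl p hpmem
        refine ⟨ρ, hρ, fun x hx hxp hxZ => ?_⟩
        exact (hball (Metric.mem_ball.mpr hx)) ⟨hxZ, by simpa using hxp⟩
      obtain ⟨ρz, hρz, hρzZ⟩ := havoid z₀
      obtain ⟨ρw, hρw, hρwZ⟩ := havoid w₀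
      have L : ∀ δ : ℝ, 0 < δ → ∃ z w : ℂ, dist z z₀ < min δ r ∧ dist w w₀ < min δ r ∧
          z ∈ Ω ∧ w ∈ Ω ∧ ψ z ≠ 0 ∧ ψ w ≠ 0 ∧ φ z = φ w ∧ z ≠ z₀ ∧ w ≠ w₀ := by
        intro δ hδ
        set ε := min (min δ r) (min ρz ρw) with hε
        have hεpos : 0 < ε := lt_min (lt_min hδ hrpos) (lt_min hρz hρw)
        have hεr : ε ≤ r := le_trans (min_le_left _ _) (min_le_right _ _)
        have hUopen : IsOpen (φ '' ball z₀ ε) :=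
          hop _ (subset_trans (ball_subset_ball hεr) hsubz) isOpen_ball
        have hVopen : IsOpen (φ '' ball w₀ ε) :=
          hop _ (subset_trans (ball_subset_ball hεr) hsubw) isOpen_ball
        have hv₀ : φ z₀ ∈ φ '' ball z₀ ε ∩ φ '' ball w₀ ε :=
          ⟨⟨z₀, mem_ball_self hεpos, rfl⟩, ⟨w₀, mem_ball_self hεpos, hφeq.symm⟩⟩
        obtain ⟨v, hv, hvne⟩ := aux_exists_ne (hUopen.inter hVopen) hv₀
        obtain ⟨z, hzball, hzv⟩ := hv.1
        obtain ⟨w, hwball, hwv⟩ := hv.2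
        have hzz₀ : z ≠ z₀ := fun h => hvne (by rw [← hzv, h])
        have hww₀ : w ≠ w₀ := fun h => hvne (by rw [← hwv, h, ← hφeq])
        have hzd : dist z z₀ < ε := mem_ball.mp hzball
        have hwd : dist w w₀ < ε := mem_ball.mp hwball
        have hzΩ : z ∈ Ω := hsubz (mem_ball.mpr (lt_of_lt_of_le hzd hεr))
        have hwΩ : w ∈ Ω := hsubw (mem_ball.mpr (lt_of_lt_of_le hwd hεr))
        have hψz : ψ z ≠ 0 := fun h0 =>
          hρzZ z (lt_of_lt_of_le hzd (le_trans (min_le_right _ _) (min_le_left _ _)))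
            hzz₀ ⟨hzΩ, h0⟩
        have hψw : ψ w ≠ 0 := fun h0 =>
          hρwZ w (lt_of_lt_of_le hwd (le_trans (min_le_right _ _) (min_le_right _ _)))
            hww₀ ⟨hwΩ, h0⟩
        exact ⟨z, w, lt_of_lt_of_le hzd (min_le_left _ _),
          lt_of_lt_of_le hwd (min_le_left _ _), hzΩ, hwΩ, hψz, hψw,
          hzv.trans hwv.symm, hzz₀, hww₀⟩
      have recm : ∀ m : ℕ, ∃ (z w : Fin m → ℂ) (ε : ℝ), 0 < ε ∧
          Function.Injective z ∧ Function.Injective w ∧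
          (∀ i, z i ∈ Ω ∧ ψ (z i) ≠ 0 ∧ dist (z i) z₀ < r ∧ ε ≤ dist (z i) z₀) ∧
          (∀ i, w i ∈ Ω ∧ ψ (w i) ≠ 0 ∧ dist (w i) w₀ < r ∧ ε ≤ dist (w i) w₀) ∧
          (∀ i, φ (z i) = φ (w i)) := by
        intro m
        induction m with
        | zero =>
          exact ⟨Fin.elim0, Fin.elim0, 1, one_pos, fun i => i.elim0, fun i => i.elim0,
            fun i => i.elim0, fun i => i.elim0, fun i => i.elim0⟩
        | succ m ih =>
          obtain ⟨z, w, ε, hε, hzinj, hwinj, hzp, hwp, hφp⟩ := ih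
          obtain ⟨zn, wn, hzd, hwd, hzΩ, hwΩ, hzψ, hwψ, hφn, hzne, hwne⟩ := L ε hε
          have hzdε : dist zn z₀ < ε := lt_of_lt_of_le hzd (min_le_left _ _)
          have hwdε : dist wn w₀ < ε := lt_of_lt_of_le hwd (min_le_left _ _)
          have hzdr : dist zn z₀ < r := lt_of_lt_of_le hzd (min_le_right _ _)
          have hwdr : dist wn w₀ < r := lt_of_lt_of_le hwd (min_le_right _ _)
          refine ⟨Fin.cons zn z, Fin.cons wn w, min (dist zn z₀) (dist wn w₀),
            lt_min (dist_pos.mpr hzne) (dist_pos.mpr hwne), ?_, ?_, ?_, ?_, ?_⟩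
          · rw [Fin.cons_injective_iff]
            refine ⟨?_, hzinj⟩
            rintro ⟨i, hi⟩
            have h1 := (hzp i).2.2.2
            rw [hi] at h1
            linarith
          · rw [Fin.cons_injective_iff]
            refine ⟨?_, hwinj⟩
            rintro ⟨i, hi⟩
            have h1 := (hwp i).2.2.2
            rw [hi] at h1
            linarith
          · intro i
            refine Fin.cases ?_ ?_ i
            · simp only [Fin.cons_zero]
              exact ⟨hzΩ, hzψ, hzdr, min_le_left _ _⟩
            · intro j
              have h := hzp j
              simp only [Fin.cons_succ]
              exact ⟨h.1, h.2.1, h.2.2.1,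
                le_trans (le_of_lt (lt_of_le_of_lt (min_le_left _ _) hzdε)) h.2.2.2⟩
          · intro i
            refine Fin.cases ?_ ?_ i
            · simp only [Fin.cons_zero]
              exact ⟨hwΩ, hwψ, hwdr, min_le_right _ _⟩
            · intro j
              have h := hwp j
              simp only [Fin.cons_succ]
              exact ⟨h.1, h.2.1, h.2.2.1,
                le_trans (le_of_lt (lt_of_le_of_lt (min_le_left _ _) hzdε)) h.2.2.2⟩
          · intro i
            refine Fin.cases ?_ ?_ i
            · simpa using hφn
            · intro j
              simp only [Fin.cons_succ]
              exact hφp j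
      obtain ⟨z, w, ε, hε, hzinj, hwinj, hzp, hwp, hφp⟩ := recm (n + 1)
      refine ⟨Sum.elim z w, ?_, ?_, ?_⟩
      · intro j k hjk
        rcases j with i | i <;> rcases k with i' | i' <;>
          simp only [Sum.elim_inl, Sum.elim_inr] at hjk
        · exact congrArg Sum.inl (hzinj hjk)
        · exact absurd ((Set.disjoint_left.mp hdisj)
            (mem_ball.mpr (hzp i).2.2.1) (mem_ball.mpr (hjk ▸ (hwp i').2.2.1))) (fun h => h)
        · exact absurd ((Set.disjoint_left.mp hdisj)
            (mem_ball.mpr (hjk ▸ (hzp i').2.2.1)) (mem_ball.mpr (hwp i).2.2.1)) (fun h => h)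
        · exact congrArg Sum.inr (hwinj hjk)
      · rintro (i | i)
        · exact ⟨(hzp i).1, (hzp i).2.1⟩
        · exact ⟨(hwp i).1, (hwp i).2.1⟩
      · exact hφp
  obtain ⟨a, hainj, hamem, haφ⟩ := claim
  have hKli : LinearIndependent ℂ (fun j => K (a j)) := by
    have h1 := (hsep _ (a ∘ finSumFinEquiv.symm) (fun i => (hamem _).1)
      (hainj.comp finSumFinEquiv.symm.injective)).comp finSumFinEquiv finSumFinEquiv.injective
    have h2 : ((fun i => K ((a ∘ ⇑finSumFinEquiv.symm) i)) ∘ ⇑finSumFinEquiv) =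
        fun j => K (a j) := by
      funext j
      simp
    rwa [h2] at h1
  apply contra (fun i => ψ (a (Sum.inr i)) • K (a (Sum.inl i)) -
      ψ (a (Sum.inl i)) • K (a (Sum.inr i)))
  · exact li_sub hKli _ _ (fun i => (hamem (Sum.inr i)).2)
  · intro i
    apply hmem
    rw [ContinuousLinearMap.sub_comp, ContinuousLinearMap.smul_comp,
      ContinuousLinearMap.smul_comp, key _ (hamem (Sum.inl i)).1,
      key _ (hamem (Sum.inr i)).1, haφ i, smul_smul, smul_smul, mul_comm, sub_self]
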